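/- Let i and j be adjacent vertices of a finite connected simple graph with d_i ≥ d_j, and let N̄(v) = N(v) ∪ {v} denote the closed neighborhood of a vertex v. Then the number of vertices in N̄(i) that are not in N̄(j) satisfies |N̄(i) \ N̄(j)| ≤ d_i · (1 − κ(i,j)). -/
import Mathlib


open Finset

/-- The probability measure at node `i`: uniform on the neighbors of `i`. -/
noncomputable def massDist {V : Type*} [Fintype V] (G : SimpleGraph V)
    [DecidableRel G.Adj] (i u : V) : ℝ :=
  if G.Adj i u then 1 / (G.degree i : ℝ) else 0

/-- `Γ` is a coupling of the measures `massDist G i` and `massDist G j`. -/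
def IsCoupling {V : Type*} [Fintype V] (G : SimpleGraph V) [DecidableRel G.Adj]
    (i j : V) (Γ : V → V → ℝ) : Prop :=
  (∀ u v, 0 ≤ Γ u v) ∧
  (∀ u, ∑ v, Γ u v = massDist G i u) ∧
  (∀ v, ∑ u, Γ u v = massDist G j v)

/-- The L¹-Wasserstein distance between the neighborhood measures of `i` and `j`,
with respect to the shortest-path distance. -/
noncomputable def wassersteinW1 {V : Type*} [Fintype V] (G : SimpleGraph V)
    [DecidableRel G.Adj] (i j : V) : ℝ :=
  sInf { c : ℝ | ∃ Γ : V → V → ℝ, IsCoupling G i j Γ ∧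
    c = ∑ u, ∑ v, Γ u v * (G.dist u v : ℝ) }

/-- The Ollivier–Ricci curvature of the edge `{i, j}` (for adjacent `i`, `j`,
so that `d(i,j) = 1`). -/
noncomputable def ollivierRicci {V : Type*} [Fintype V] (G : SimpleGraph V)
    [DecidableRel G.Adj] (i j : V) : ℝ :=
  1 - wassersteinW1 G i j


lemma sum_massDist {V : Type*} [Fintype V] (G : SimpleGraph V) [DecidableRel G.Adj]
    (j : V) (h : 1 ≤ G.degree j) :
    ∑ v, massDist G j v = 1 := by
  have hd : (G.degree j : ℝ) ≠ 0 := by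
    have := Nat.lt_of_lt_of_le Nat.zero_lt_one h
    positivity
  unfold massDist
  rw [Finset.sum_ite, Finset.sum_const_zero, add_zero, Finset.sum_const]
  have hfil : Finset.univ.filter (G.Adj j) = G.neighborFinset j := by
    ext v; simp [SimpleGraph.mem_neighborFinset]
  rw [hfil, SimpleGraph.card_neighborFinset_eq_degree, nsmul_eq_mul]
  field_simp

/-- The number of vertices in the closed neighborhood of `i` that are not in the
closed neighborhood of `j` is bounded by `dᵢ (1 - κ(i,j))`. -/
theorem card_closedNeighborhood_sdiff_le
    {V : Type*} [Fintype V] [DecidableEq V] (G : SimpleGraph V) [DecidableRel G.Adj]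
    (hconn : G.Connected) (hdeg : ∀ v : V, 1 ≤ G.degree v)
    (i j : V) (hij : G.Adj i j) (hdij : G.degree j ≤ G.degree i) :
    ((insert i (G.neighborFinset i) \ insert j (G.neighborFinset j)).card : ℝ) ≤
      (G.degree i : ℝ) * (1 - ollivierRicci G i j) := by
  have hdi : (0:ℝ) < G.degree i := by
    have := Nat.lt_of_lt_of_le Nat.zero_lt_one (hdeg i)
    positivity
  set S := insert i (G.neighborFinset i) \ insert j (G.neighborFinset j) with hS
  have hi_mem : i ∈ insert j (G.neighborFinset j) := by
    simp [SimpleGraph.mem_neighborFinset, hij.symm]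
  unfold ollivierRicci
  ring_nf
  rw [mul_comm, ← div_le_iff₀ hdi]
  unfold wassersteinW1
  apply le_csInf
  · -- nonempty: the product coupling
    refine ⟨_, fun u v => massDist G i u * massDist G j v, ⟨?_, ?_, ?_⟩, rfl⟩
    · intro u v
      unfold massDist
      positivity
    · intro u
      rw [← Finset.mul_sum, sum_massDist G j (hdeg j), mul_one]
    · intro v
      rw [← Finset.sum_mul, sum_massDist G i (hdeg i), one_mul]
  · rintro c ⟨Γ, ⟨hpos, hrow, hcol⟩, rfl⟩
    have key : ∀ u ∈ S, (1:ℝ) / G.degree i ≤ ∑ v, Γ u v * (G.dist u v : ℝ) := by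
      intro u hu
      rw [hS, Finset.mem_sdiff, Finset.mem_insert] at hu
      obtain ⟨hu1, hu2⟩ := hu
      have hui : u ≠ i := fun h => hu2 (h ▸ hi_mem)
      have huN : G.Adj i u := by
        rcases hu1 with h | h
        · exact absurd h hui
        · exact (SimpleGraph.mem_neighborFinset G i u).mp h
      have hmass : massDist G i u = 1 / G.degree i := by
        unfold massDist; simp [huN]
      calc (1:ℝ) / G.degree i = ∑ v, Γ u v := by rw [hrow u, hmass]
        _ ≤ ∑ v, Γ u v * (G.dist u v : ℝ) := by
            apply Finset.sum_le_sum
            intro v _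
            by_cases hv : G.Adj j v
            · have huv : u ≠ v := by
                rintro rfl
                exact hu2 (Finset.mem_insert_of_mem ((SimpleGraph.mem_neighborFinset G j u).mpr hv))
              have hdist : 1 ≤ (G.dist u v : ℝ) := by
                exact_mod_cast hconn.pos_dist_of_ne huv
              exact le_mul_of_one_le_right (hpos u v) hdist
            · have h0 : Γ u v = 0 := by
                have hsum : ∑ w, Γ w v = 0 := by
                  rw [hcol v]; unfold massDist; simp [hv]
                exact (Finset.sum_eq_zero_iff_of_nonneg (fun w _ => hpos w v)).mp hsum u (Finset.mem_univ u)
              rw [h0, zero_mul]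
    calc (S.card : ℝ) / G.degree i = ∑ _u ∈ S, (1:ℝ) / G.degree i := by
          rw [Finset.sum_const, nsmul_eq_mul]; ring
      _ ≤ ∑ u ∈ S, ∑ v, Γ u v * (G.dist u v : ℝ) := Finset.sum_le_sum key
      _ ≤ ∑ u, ∑ v, Γ u v * (G.dist u v : ℝ) := by
          apply Finset.sum_le_sum_of_subset_of_nonneg (Finset.subset_univ S)
          intro u _ _
          apply Finset.sum_nonneg
          intro v _
          exact mul_nonneg (hpos u v) (Nat.cast_nonneg _)
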